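/- Assume xi(a) = 0 for every node a (the case of zero merge cost α_merge = 0, in which the objective Cost_a(S) reduces to Σ_{b ∈ S} cost(b)). Then for every node a belonging to V, sigma(a) = min{ Σ_{b ∈ S} cost(b) : S is feasible for subtree(a) }, and this minimum is attained by the set Vstar(a) computed by the recurrences; i.e., the dynamic program of Theorem 1 computes a minimum-cost feasible selection of nodes. -/

import Mathlib

/-!
Theorem 1 of "STREAK": in the case of zero merge cost (`xi ≡ 0`), the dynamic
program computes a minimum-cost feasible selection of nodes.

Nodes of a finite rooted tree are represented by paths (lists of child indices)
from the root.
-/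

open scoped Classical

/-- A finite rooted tree: each node has a finite list of children. -/
inductive RTree : Type where
  | node : List RTree → RTree

namespace RTree

/-- The subtree reached by following a path of child indices, if it exists. -/
def subAt : RTree → List ℕ → Option RTree
  | t, [] => some t
  | node cs, i :: p =>
    match cs[i]? with
    | some c => subAt c p
    | none => none
termination_by t p => p.length

/-- A path is a node of the tree if following it leads to a subtree. -/
def valid (t : RTree) (p : List ℕ) : Prop := (t.subAt p).isSome

/-- `subtreeOf t p` is the set of nodes of `t` consisting of `p` together with
all of its descendants (nodes whose path extends `p`). -/
def subtreeOf (t : RTree) (p : List ℕ) : Set (List ℕ) :=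
  {q | t.valid q ∧ p <+: q}

/-- A node `p ∈ V` is a `V`-leaf if no child of `p` belongs to `V`. -/
def VLeaf (t : RTree) (V : Set (List ℕ)) (p : List ℕ) : Prop :=
  p ∈ V ∧ t.valid p ∧ ∀ i : ℕ, p ++ [i] ∉ V

/-- `S` is feasible for the subtree rooted at `p`: `S ⊆ V ∩ subtree(p)` and
every `V`-leaf lying in `subtree(p)` has an ancestor-or-self, itself lying in
`subtree(p)`, that belongs to `S`. -/
def Feasible (t : RTree) (V : Set (List ℕ)) (p : List ℕ) (S : Set (List ℕ)) : Prop :=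
  S ⊆ V ∩ subtreeOf t p ∧
  ∀ q, VLeaf t V q → q ∈ subtreeOf t p →
    ∃ r ∈ S, r ∈ subtreeOf t p ∧ r <+: q

/-- The dynamic program of Theorem 1: for the subtree rooted at path `p`,
compute `(Vstar p, sigma p, xistar p)` by the recurrences.  If `p ∉ V` the
value is `(∅, 0, 0)`; if `p` is a `V`-leaf (no child in `V`) it is
`({p}, cost p, xi p)`; otherwise, with `γ` the children of `p` belonging to
`V`, `μ = Σ_{j ∈ γ} xistar j` if `|γ| > 1` and `0` otherwise, the value is
`({p}, cost p, xi p)` when `cost p < μ + Σ_{j ∈ γ} sigma j`, and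
`(⋃_{j ∈ γ} Vstar j, Σ_{j ∈ γ} sigma j + μ, Σ_{j ∈ γ} xistar j)` otherwise. -/
noncomputable def dp (V : Set (List ℕ)) (cost xi : List ℕ → ℝ) :
    RTree → List ℕ → Set (List ℕ) × ℝ × ℝ
  | node cs, p =>
    let recs := (cs.zipIdx.map Prod.swap).attach.map fun x =>
      (p ++ [x.1.1], dp V cost xi x.1.2 (p ++ [x.1.1]))
    if p ∈ V then
      let γ := recs.filter fun r => decide (r.1 ∈ V)
      if γ.isEmpty then ({p}, cost p, xi p)
      else
        let σsum := (γ.map fun r => r.2.2.1).sum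
        let ξsum := (γ.map fun r => r.2.2.2).sum
        let μ := if 1 < γ.length then ξsum else 0
        if cost p < μ + σsum then ({p}, cost p, xi p)
        else (⋃ r ∈ γ, r.2.1, σsum + μ, ξsum)
    else (∅, 0, 0)
termination_by t _ => sizeOf t
decreasing_by
  simp_wf
  have hx : x.1.2 ∈ cs := by
    have h1 : x.1.2 ∈ (cs.zipIdx.map Prod.swap).map Prod.snd := List.mem_map_of_mem x.2
    simp [List.map_map] at h1
    obtain ⟨k, hk⟩ := h1
    rw [List.mem_zipIdx_iff_getElem?] at hk
    exact List.mem_of_getElem? hk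
  have := List.sizeOf_lt_of_mem hx
  omega

/-- `Vstar a`, for a node `a` of the tree `t`. -/
noncomputable def VstarAt (t : RTree) (V : Set (List ℕ)) (cost xi : List ℕ → ℝ)
    (p : List ℕ) : Set (List ℕ) :=
  match t.subAt p with
  | some s => (dp V cost xi s p).1
  | none => ∅

/-- `sigma a`, for a node `a` of the tree `t`. -/
noncomputable def sigmaAt (t : RTree) (V : Set (List ℕ)) (cost xi : List ℕ → ℝ)
    (p : List ℕ) : ℝ :=
  match t.subAt p with
  | some s => (dp V cost xi s p).2.1
  | none => 0

end RTree
namespace RTree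

theorem subAt_append (p : List ℕ) : ∀ (t : RTree) (q : List ℕ),
    t.subAt (p ++ q) = (t.subAt p).bind (fun s => s.subAt q) := by
  induction p with
  | nil => intro t q; simp [subAt]
  | cons i p ih =>
    intro t q
    cases t with
    | node cs =>
      cases h : cs[i]? with
      | none => simp [subAt, h]
      | some c => simp [subAt, h, ih]

theorem valid_prefix {t : RTree} {q r : List ℕ} (hq : t.valid q) (hr : r <+: q) :
    t.valid r := by
  obtain ⟨u, rfl⟩ := hr
  unfold valid at *
  rw [subAt_append] at hq
  cases h : t.subAt r with
  | none => rw [h] at hq; simp at hq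
  | some s => simp [h]

theorem finite_valid : ∀ t : RTree, {q | t.valid q}.Finite
  | node cs => by
    have IH : ∀ c ∈ cs, {q | c.valid q}.Finite := fun c hc =>
      have : sizeOf c < sizeOf (node cs) := by
        have := List.sizeOf_lt_of_mem hc; simp; omega
      finite_valid c
    have hsubset : {q | (node cs).valid q} ⊆
        insert [] (⋃ i : Fin cs.length, (fun q => (i : ℕ) :: q) '' {q | (cs.get i).valid q}) := by
      intro q hq
      cases q with
      | nil => exact Set.mem_insert _ _
      | cons i q' =>
        refine Set.mem_insert_iff.mpr (Or.inr ?_)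
        simp only [Set.mem_iUnion, Set.mem_image, Set.mem_setOf_eq]
        simp only [Set.mem_setOf_eq, valid, subAt] at hq
        cases h : cs[i]? with
        | none => rw [h] at hq; simp at hq
        | some c =>
          rw [h] at hq
          have hi : i < cs.length := by
            by_contra hcon
            rw [List.getElem?_eq_none (by omega)] at h; simp at h
          refine ⟨⟨i, hi⟩, q', ?_, rfl⟩
          have hgc : cs[i] = c := by
            have := List.getElem?_eq_getElem hi
            rw [h] at this; exact (Option.some.inj this).symm
          have hq' : (c.subAt q').isSome := hq
          simpa [valid, List.get_eq_getElem, hgc] using hq'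
    refine Set.Finite.subset (Set.Finite.insert _ ?_) hsubset
    exact Set.finite_iUnion (fun i : Fin cs.length =>
      Set.Finite.image _ (IH _ (by simpa using List.get_mem cs i.1 i.2)))
termination_by t => sizeOf t

theorem tsum_fin {α : Type*} (f : α → ℝ) {S : Set α} (h : S.Finite) :
    ∑' (b : S), f b = ∑ b ∈ h.toFinset, f b := by
  rw [tsum_subtype]
  rw [tsum_eq_sum (s := h.toFinset) (fun b hb => by
    simp only [Set.indicator_apply, Set.Finite.mem_toFinset] at *
    simp [hb])]
  exact Finset.sum_congr rfl fun b hb => by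
    simp only [Set.Finite.mem_toFinset] at hb; simp [Set.indicator_apply, hb]

theorem summable_fin {α : Type*} (f : α → ℝ) {S : Set α} (h : S.Finite) :
    Summable (fun b : S => f b) := by
  have := h.to_subtype
  exact Summable.of_finite

theorem tsum_biUnion_list {α β : Type*} (f : α → ℝ) (γ : List β) (g : β → Set α)
    (hfin : ∀ r ∈ γ, (g r).Finite)
    (hdis : γ.Pairwise fun a b => Disjoint (g a) (g b)) :
    ∑' (x : ↑(⋃ r ∈ γ, g r)), f x = (γ.map fun r => ∑' (x : ↑(g r)), f x).sum := by
  induction γ with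
  | nil => simp [tsum_empty]
  | cons a l ih =>
    have hU : (⋃ r ∈ (a :: l), g r) = g a ∪ ⋃ r ∈ l, g r := by
      ext x; simp [List.mem_cons, or_and_right, Set.mem_iUnion, exists_or]
    have hfa : (g a).Finite := hfin a (List.mem_cons_self (a := a) (l := l))
    have hfl : (⋃ r ∈ l, g r).Finite :=
      Set.Finite.biUnion l.finite_toSet (fun r hr => hfin r (List.mem_cons_of_mem a hr))
    have hd : Disjoint (g a) (⋃ r ∈ l, g r) := by
      refine Set.disjoint_right.mpr ?_
      intro x hx hxa
      simp only [Set.mem_iUnion] at hx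
      obtain ⟨r, hr, hxr⟩ := hx
      exact Set.disjoint_left.mp ((List.pairwise_cons.mp hdis).1 r hr) hxa hxr
    rw [hU, (summable_fin f hfa).tsum_union_disjoint hd (summable_fin f hfl)]
    rw [ih (fun r hr => hfin r (List.mem_cons_of_mem a hr)) (List.pairwise_cons.mp hdis).2]
    simp

theorem sum_list_le {α : Type*} (f : α → ℝ) (hf : ∀ a, 0 ≤ f a) :
    ∀ (L : List (Finset α)) (S : Finset α), (∀ T ∈ L, T ⊆ S) →
    L.Pairwise (fun T T' => Disjoint T T') →
    (L.map fun T => ∑ a ∈ T, f a).sum ≤ ∑ a ∈ S, f a := by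
  intro L
  induction L with
  | nil => intro S _ _; simpa using Finset.sum_nonneg fun a _ => hf a
  | cons T l ih =>
    intro S hsub hdis
    have hTS : T ⊆ S := hsub T (List.mem_cons_self (a := T) (l := l))
    have h1 : ∀ T' ∈ l, T' ⊆ S \ T := by
      intro T' hT' x hx
      refine Finset.mem_sdiff.mpr ⟨hsub T' (List.mem_cons_of_mem T hT') hx, ?_⟩
      exact fun hxT => Finset.disjoint_left.mp ((List.pairwise_cons.mp hdis).1 T' hT') hxT hx
    have h2 := ih (S \ T) h1 (List.pairwise_cons.mp hdis).2
    have h3 : ∑ a ∈ S \ T, f a + ∑ a ∈ T, f a = ∑ a ∈ S, f a :=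
      Finset.sum_sdiff hTS
    simp only [List.map_cons, List.sum_cons]
    linarith

theorem mem_V_of_prefix {V : Set (List ℕ)}
    (hanc : ∀ (p : List ℕ) (i : ℕ), p ++ [i] ∈ V → p ∈ V)
    {q : List ℕ} (hq : q ∈ V) : ∀ {r : List ℕ}, r <+: q → r ∈ V := by
  intro r hr
  obtain ⟨u, rfl⟩ := hr
  induction u using List.reverseRecOn with
  | nil => simpa using hq
  | append_singleton u i ih =>
    rw [← List.append_assoc] at hq
    exact ih (hanc _ _ hq)

theorem feasible_singleton {t : RTree} {V : Set (List ℕ)} {p : List ℕ}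
    (hpV : p ∈ V) (hval : t.valid p) : Feasible t V p {p} := by
  constructor
  · intro r hr
    rw [Set.mem_singleton_iff] at hr
    subst hr
    exact ⟨hpV, hval, List.prefix_refl _⟩
  · intro q _ hq
    exact ⟨p, rfl, ⟨hval, List.prefix_refl p⟩, hq.2⟩

theorem tsum_singleton_cost (cost : List ℕ → ℝ) (p : List ℕ) :
    ∑' (b : ({p} : Set (List ℕ))), cost b.1 = cost p := by
  exact tsum_singleton p cost

theorem subtree_disjoint {t : RTree} {p : List ℕ} {i j : ℕ} (hij : i ≠ j) :
    Disjoint (subtreeOf t (p ++ [i])) (subtreeOf t (p ++ [j])) := by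
  refine Set.disjoint_left.mpr ?_
  rintro q ⟨_, hiq⟩ ⟨_, hjq⟩
  obtain ⟨u, hu⟩ := hiq
  obtain ⟨v, hv⟩ := hjq
  rw [← hu, List.append_assoc, List.append_assoc, List.append_right_inj] at hv
  simp at hv
  exact hij hv.1.symm

theorem subtree_mono {t : RTree} {p q : List ℕ} (h : p <+: q) :
    subtreeOf t q ⊆ subtreeOf t p := fun r hr => ⟨hr.1, h.trans hr.2⟩

/-- The filtered list `γ` of children of `p` (with their dp values) lying in `V`. -/
theorem mem_swap_zipIdx {cs : List RTree} {i : ℕ} {c : RTree} :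
    (i, c) ∈ cs.zipIdx.map Prod.swap ↔ cs[i]? = some c := by
  constructor
  · intro h
    obtain ⟨⟨c', i'⟩, hm, he⟩ := List.mem_map.mp h
    simp only [Prod.swap_prod_mk, Prod.mk.injEq] at he
    obtain ⟨rfl, rfl⟩ := he
    exact List.mem_zipIdx_iff_getElem?.mp hm
  · intro h
    exact List.mem_map.mpr ⟨(c, i), List.mem_zipIdx_iff_getElem?.mpr h, rfl⟩

noncomputable def gammaL (V : Set (List ℕ)) (cost xi : List ℕ → ℝ) (cs : List RTree)
    (p : List ℕ) : List (List ℕ × Set (List ℕ) × ℝ × ℝ) :=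
  ((cs.zipIdx.map Prod.swap).attach.map fun x =>
    (p ++ [x.1.1], dp V cost xi x.1.2 (p ++ [x.1.1]))).filter fun r => decide (r.1 ∈ V)

theorem dp_node_eq (V : Set (List ℕ)) (cost xi : List ℕ → ℝ) (cs : List RTree) (p : List ℕ)
    (hpV : p ∈ V) :
    dp V cost xi (node cs) p =
      (if (gammaL V cost xi cs p).isEmpty then ({p}, cost p, xi p)
       else if cost p <
          (if 1 < (gammaL V cost xi cs p).length
            then ((gammaL V cost xi cs p).map fun r => r.2.2.2).sum else 0) +
          ((gammaL V cost xi cs p).map fun r => r.2.2.1).sum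
        then ({p}, cost p, xi p)
       else ((⋃ r ∈ (gammaL V cost xi cs p), r.2.1),
         ((gammaL V cost xi cs p).map fun r => r.2.2.1).sum +
           (if 1 < (gammaL V cost xi cs p).length
             then ((gammaL V cost xi cs p).map fun r => r.2.2.2).sum else 0),
         ((gammaL V cost xi cs p).map fun r => r.2.2.2).sum)) := by
  rw [dp]
  simp only [hpV, if_true, gammaL]
  rfl

theorem mem_gammaL {V : Set (List ℕ)} {cost xi : List ℕ → ℝ} {cs : List RTree} {p : List ℕ}
    {r : List ℕ × Set (List ℕ) × ℝ × ℝ} :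
    r ∈ gammaL V cost xi cs p ↔
      ∃ i c, cs[i]? = some c ∧ r = (p ++ [i], dp V cost xi c (p ++ [i])) ∧ p ++ [i] ∈ V := by
  constructor
  · intro hr
    rw [gammaL, List.mem_filter] at hr
    obtain ⟨hr1, hr2⟩ := hr
    rw [List.mem_map] at hr1
    obtain ⟨x, _, hx⟩ := hr1
    refine ⟨x.1.1, x.1.2, ?_, hx.symm, ?_⟩
    · exact mem_swap_zipIdx.mp x.2
    · have := of_decide_eq_true hr2
      rwa [← hx] at this
  · rintro ⟨i, c, hic, rfl, hV⟩
    rw [gammaL, List.mem_filter]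
    refine ⟨?_, decide_eq_true hV⟩
    rw [List.mem_map]
    exact ⟨⟨(i, c), mem_swap_zipIdx.mpr hic⟩, List.mem_attach _ _, rfl⟩

theorem gammaL_fst_nodup (V : Set (List ℕ)) (cost xi : List ℕ → ℝ) (cs : List RTree)
    (p : List ℕ) : ((gammaL V cost xi cs p).map Prod.fst).Nodup := by
  have h1 : (((cs.zipIdx.map Prod.swap).attach.map fun x =>
      (p ++ [x.1.1], dp V cost xi x.1.2 (p ++ [x.1.1]))).map Prod.fst).Nodup := by
    rw [List.map_map]
    have h2 : (cs.zipIdx.map Prod.swap).attach.map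
        (Prod.fst ∘ fun x : {x // x ∈ (cs.zipIdx.map Prod.swap)} =>
          (p ++ [x.1.1], dp V cost xi x.1.2 (p ++ [x.1.1]))) =
        (cs.zipIdx.map Prod.swap).map (fun y => p ++ [y.1]) := by
      calc (cs.zipIdx.map Prod.swap).attach.map (Prod.fst ∘ fun x : {x // x ∈ (cs.zipIdx.map Prod.swap)} =>
            (p ++ [x.1.1], dp V cost xi x.1.2 (p ++ [x.1.1])))
          = (cs.zipIdx.map Prod.swap).attach.map ((fun y : ℕ × RTree => p ++ [y.1]) ∘ Subtype.val) := rfl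
        _ = ((cs.zipIdx.map Prod.swap).attach.map Subtype.val).map (fun y : ℕ × RTree => p ++ [y.1]) := by
            rw [List.map_map]
        _ = (cs.zipIdx.map Prod.swap).map (fun y => p ++ [y.1]) := by rw [List.attach_map_subtype_val]
    rw [h2]
    have h3 : (cs.zipIdx.map Prod.swap).map (fun y => p ++ [y.1]) =
        ((cs.zipIdx.map Prod.swap).map Prod.fst).map (fun i => p ++ [i]) := by
          rw [List.map_map (l := List.map Prod.swap cs.zipIdx)]; rfl
    rw [h3]
    refine List.Nodup.map ?_ (by
        rw [List.map_map, show (Prod.fst ∘ Prod.swap : RTree × ℕ → ℕ) = Prod.snd from rfl,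
          List.zipIdx_map_snd]
        exact List.nodup_range')
    intro i j hij
    simpa using hij
  have hsub : List.Sublist ((gammaL V cost xi cs p).map Prod.fst)
      (((cs.zipIdx.map Prod.swap).attach.map fun x =>
        (p ++ [x.1.1], dp V cost xi x.1.2 (p ++ [x.1.1]))).map Prod.fst) :=
    (List.filter_sublist).map _
  exact h1.sublist hsub

/-- The specification carried through the induction. -/
def Spec (t : RTree) (V : Set (List ℕ)) (cost xi : List ℕ → ℝ) (s : RTree) (p : List ℕ) :
    Prop :=
  IsLeast {x : ℝ | ∃ S : Set (List ℕ), Feasible t V p S ∧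
      x = ∑' b : (S : Set (List ℕ)), cost b.1} (dp V cost xi s p).2.1 ∧
  Feasible t V p (dp V cost xi s p).1 ∧
  (dp V cost xi s p).2.1 = ∑' b : ((dp V cost xi s p).1 : Set (List ℕ)), cost b.1 ∧
  (dp V cost xi s p).2.2 = 0

theorem spec_node (t : RTree) (V : Set (List ℕ)) (cost xi : List ℕ → ℝ)
    (hVnodes : ∀ p ∈ V, t.valid p)
    (hanc : ∀ (p : List ℕ) (i : ℕ), p ++ [i] ∈ V → p ∈ V)
    (hcost : ∀ p, 0 ≤ cost p) (hxi : ∀ p, xi p = 0)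
    (cs : List RTree) (p : List ℕ)
    (IH : ∀ c ∈ cs, ∀ q, t.subAt q = some c → q ∈ V → Spec t V cost xi c q)
    (hsub : t.subAt p = some (node cs)) (hpV : p ∈ V) :
    Spec t V cost xi (node cs) p := by
  set γ := gammaL V cost xi cs p with hγ
  have validp : t.valid p := by rw [valid, hsub]; rfl
  have F0 : ∀ i : ℕ, t.subAt (p ++ [i]) = cs[i]? := by
    intro i
    rw [subAt_append, hsub, Option.bind_some]
    cases h : cs[i]? with
    | none => simp [subAt, h]
    | some c => simp [subAt, h]
  -- key properties of elements of γ
  have hkey : ∀ r ∈ γ, (∃ i : ℕ, r.1 = p ++ [i]) ∧ r.1 ∈ V ∧ t.valid r.1 ∧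
      IsLeast {x : ℝ | ∃ S : Set (List ℕ), Feasible t V r.1 S ∧
        x = ∑' b : (S : Set (List ℕ)), cost b.1} r.2.2.1 ∧
      Feasible t V r.1 r.2.1 ∧
      r.2.2.1 = ∑' b : (r.2.1 : Set (List ℕ)), cost b.1 ∧ r.2.2.2 = 0 := by
    intro r hr
    obtain ⟨i, c, hic, rfl, hV⟩ := mem_gammaL.mp hr
    have hsubi : t.subAt (p ++ [i]) = some c := by rw [F0]; exact hic
    have hval : t.valid (p ++ [i]) := by rw [valid, hsubi]; rfl
    have hspec := IH c (List.mem_of_getElem? hic) (p ++ [i]) hsubi hV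
    exact ⟨⟨i, rfl⟩, hV, hval, hspec.1, hspec.2.1, hspec.2.2.1, hspec.2.2.2⟩
  -- the xi-sums vanish
  have F2 : (γ.map fun r => r.2.2.2).sum = 0 := by
    refine List.sum_eq_zero ?_
    intro x hx
    rw [List.mem_map] at hx
    obtain ⟨r, hr, rfl⟩ := hx
    exact (hkey r hr).2.2.2.2.2.2
  have hμ : (if 1 < γ.length then (γ.map fun r => r.2.2.2).sum else 0) = 0 := by
    rw [F2]; simp
  -- children of p lying in V give elements of γ
  have F4 : ∀ i : ℕ, p ++ [i] ∈ V → ∃ r ∈ γ, r.1 = p ++ [i] := by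
    intro i hi
    have hval : t.valid (p ++ [i]) := hVnodes _ hi
    rw [valid, F0] at hval
    obtain ⟨c, hc⟩ := Option.isSome_iff_exists.mp hval
    exact ⟨(p ++ [i], dp V cost xi c (p ++ [i])), mem_gammaL.mpr ⟨i, c, hc, rfl, hi⟩, rfl⟩
  -- pairwise disjointness of the child subtrees
  have F3 : γ.Pairwise fun r r' => Disjoint (subtreeOf t r.1) (subtreeOf t r'.1) := by
    have hnd : (γ.map Prod.fst).Nodup := gammaL_fst_nodup V cost xi cs p
    have hne : γ.Pairwise fun a b => a.1 ≠ b.1 := List.pairwise_map.mp hnd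
    refine List.Pairwise.imp_of_mem ?_ hne
    intro a b ha hb hab
    obtain ⟨i, hi⟩ := (hkey a ha).1
    obtain ⟨j, hj⟩ := (hkey b hb).1
    rw [hi, hj]
    refine subtree_disjoint ?_
    intro hij; exact hab (by rw [hi, hj, hij])
  -- finiteness of feasible sets
  have hfeas_fin : ∀ S : Set (List ℕ), Feasible t V p S → S.Finite := by
    intro S hS
    exact (finite_valid t).subset fun x hx => (hS.1 hx).2.1
  -- lower bound when p ∉ S
  have LB : ∀ S : Set (List ℕ), Feasible t V p S → ∀ (hS : S.Finite), p ∉ S →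
      (γ.map fun r => r.2.2.1).sum ≤ ∑ b ∈ hS.toFinset, cost b := by
    intro S hFS hSfin hpS
    have hrest : ∀ r ∈ γ, Feasible t V r.1 (S ∩ subtreeOf t r.1) := by
      intro r hr
      obtain ⟨i, hi⟩ := (hkey r hr).1
      constructor
      · intro x hx; exact ⟨(hFS.1 hx.1).1, hx.2⟩
      · intro q hq hqsub
        have hqp : q ∈ subtreeOf t p :=
          subtree_mono (hi ▸ (List.prefix_append p [i])) hqsub
        obtain ⟨r', hr'S, hr'sub, hr'q⟩ := hFS.2 q hq hqp
        have hne : r' ≠ p := fun h => hpS (h ▸ hr'S)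
        obtain ⟨w, hw⟩ := hr'sub.2
        have hwne : w ≠ [] := by rintro rfl; exact hne (by simpa using hw.symm)
        obtain ⟨j, w', rfl⟩ : ∃ j w', w = j :: w' := by
          cases w with
          | nil => exact absurd rfl hwne
          | cons j w' => exact ⟨j, w', rfl⟩
        have hiq : p ++ [i] <+: q := hi ▸ hqsub.2
        have hr'q2 : p ++ (j :: w') <+: q := hw ▸ hr'q
        obtain ⟨u, hu⟩ := hiq
        obtain ⟨v, hv⟩ := hr'q2
        rw [← hu] at hv
        rw [List.append_assoc, List.append_assoc, List.append_right_inj] at hv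
        have hji : j = i := by
          have := hv
          simp only [List.singleton_append, List.cons_append, List.cons.injEq] at this
          exact this.1
        subst hji
        have hpir' : p ++ [j] <+: r' := by
          rw [← hw]
          exact ⟨w', by simp⟩
        refine ⟨r', ⟨hr'S, ?_⟩, ?_, hr'q⟩
        · rw [hi]; exact ⟨hr'sub.1, hpir'⟩
        · rw [hi]; exact ⟨hr'sub.1, hpir'⟩
    have hpt : ∀ r ∈ γ, r.2.2.1 ≤
        ∑ b ∈ ((hSfin.inter_of_left (subtreeOf t r.1)).toFinset), cost b := by
      intro r hr
      have hlb := ((hkey r hr).2.2.2.1).2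
          ⟨S ∩ subtreeOf t r.1, hrest r hr, rfl⟩
      rwa [tsum_fin cost (hSfin.inter_of_left _)] at hlb
    calc (γ.map fun r => r.2.2.1).sum
        ≤ (γ.map fun r =>
            ∑ b ∈ (hSfin.inter_of_left (subtreeOf t r.1)).toFinset, cost b).sum :=
          List.sum_le_sum hpt
      _ ≤ ∑ b ∈ hSfin.toFinset, cost b := by
          have hdisF : (γ.map fun r =>
              (hSfin.inter_of_left (subtreeOf t r.1)).toFinset).Pairwise
              (fun T T' => Disjoint T T') := by
            rw [List.pairwise_map]
            refine F3.imp ?_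
            intro a b hab
            rw [Finset.disjoint_left]
            intro x hx hx'
            rw [Set.Finite.mem_toFinset] at hx hx'
            exact Set.disjoint_left.mp hab hx.2 hx'.2
          have hsubF : ∀ T ∈ (γ.map fun r =>
              (hSfin.inter_of_left (subtreeOf t r.1)).toFinset), T ⊆ hSfin.toFinset := by
            intro T hT
            rw [List.mem_map] at hT
            obtain ⟨r, hr, rfl⟩ := hT
            intro x hx
            rw [Set.Finite.mem_toFinset] at hx
            rw [Set.Finite.mem_toFinset]
            exact hx.1
          have := sum_list_le cost hcost
            (γ.map fun r => (hSfin.inter_of_left (subtreeOf t r.1)).toFinset)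
            hSfin.toFinset hsubF hdisF
          rw [List.map_map] at this
          exact this
  -- common facts about the singleton candidate
  have hsingle_mem : cost p ∈ {x : ℝ | ∃ S : Set (List ℕ), Feasible t V p S ∧
      x = ∑' b : (S : Set (List ℕ)), cost b.1} :=
    ⟨{p}, feasible_singleton hpV validp, (tsum_singleton_cost cost p).symm⟩
  have hcostle : ∀ (S : Set (List ℕ)), (hSfin : S.Finite) → p ∈ S →
      cost p ≤ ∑ b ∈ hSfin.toFinset, cost b := fun S hSfin hp =>
    Finset.single_le_sum (fun b _ => hcost b) (hSfin.mem_toFinset.mpr hp)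
  by_cases hE : γ.isEmpty
  · -- p is a V-leaf
    have hγnil : γ = [] := by
      cases h : γ with
      | nil => rfl
      | cons a l => rw [h] at hE; simp at hE
    have hleafV : ∀ i : ℕ, p ++ [i] ∉ V := by
      intro i hi
      obtain ⟨r, hr, -⟩ := F4 i hi
      rw [hγnil] at hr
      exact absurd hr List.not_mem_nil
    have hdp : dp V cost xi (node cs) p = ({p}, cost p, xi p) := by
      rw [dp_node_eq V cost xi cs p hpV, ← hγ, if_pos hE]
    unfold Spec
    rw [hdp]
    refine ⟨⟨hsingle_mem, ?_⟩, feasible_singleton hpV validp,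
      (tsum_singleton_cost cost p).symm, hxi p⟩
    rintro x ⟨S, hFS, rfl⟩
    have hSfin := hfeas_fin S hFS
    obtain ⟨r, hrS, hrsub, hrp⟩ := hFS.2 p ⟨hpV, validp, hleafV⟩ ⟨validp, List.prefix_refl p⟩
    have hrpe : r = p := hrp.eq_of_length (le_antisymm hrp.length_le hrsub.2.length_le)
    rw [tsum_fin cost hSfin]
    exact hcostle S hSfin (hrpe ▸ hrS)
  · -- p has children in V
    obtain ⟨r0, hr0⟩ : ∃ r, r ∈ γ := by
      cases h : γ with
      | nil => rw [h] at hE; exact absurd rfl hE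
      | cons a l => exact ⟨a, h ▸ List.mem_cons_self (a := a) (l := l)⟩
    rcases lt_or_ge (cost p) ((γ.map fun r => r.2.2.1).sum) with hlt | hge
    · have hdp : dp V cost xi (node cs) p = ({p}, cost p, xi p) := by
        rw [dp_node_eq V cost xi cs p hpV, ← hγ, if_neg hE,
          if_pos (by rw [hμ, zero_add]; exact hlt)]
      unfold Spec
      rw [hdp]
      refine ⟨⟨hsingle_mem, ?_⟩, feasible_singleton hpV validp,
        (tsum_singleton_cost cost p).symm, hxi p⟩
      rintro x ⟨S, hFS, rfl⟩
      have hSfin := hfeas_fin S hFS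
      rw [tsum_fin cost hSfin]
      by_cases hpS : p ∈ S
      · exact hcostle S hSfin hpS
      · exact le_trans (le_of_lt hlt) (LB S hFS hSfin hpS)
    · have hdp : dp V cost xi (node cs) p =
          ((⋃ r ∈ γ, r.2.1), (γ.map fun r => r.2.2.1).sum, 0) := by
        rw [dp_node_eq V cost xi cs p hpV, ← hγ, if_neg hE,
          if_neg (by rw [hμ, zero_add]; exact not_lt.mpr hge), hμ, F2, add_zero]
      have hfinU : ∀ r ∈ γ, (r.2.1 : Set (List ℕ)).Finite := fun r hr =>
        (finite_valid t).subset fun x hx => ((hkey r hr).2.2.2.2.1.1 hx).2.1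
      have hdisU : γ.Pairwise fun a b => Disjoint (a.2.1 : Set (List ℕ)) b.2.1 := by
        refine List.Pairwise.imp_of_mem ?_ F3
        intro a b ha hb hab
        exact hab.mono (fun x hx => ((hkey a ha).2.2.2.2.1.1 hx).2)
          (fun x hx => ((hkey b hb).2.2.2.2.1.1 hx).2)
      have htsum : (∑' b : ↑(⋃ r ∈ γ, (r.2.1 : Set (List ℕ))), cost b.1) =
          (γ.map fun r => r.2.2.1).sum := by
        rw [tsum_biUnion_list (fun b => cost b) γ (fun r => r.2.1) hfinU hdisU]
        exact congrArg List.sum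
          (List.map_congr_left fun r hr => ((hkey r hr).2.2.2.2.2.1).symm)
      have hfeasU : Feasible t V p (⋃ r ∈ γ, r.2.1) := by
        constructor
        · intro x hx
          rw [Set.mem_iUnion₂] at hx
          obtain ⟨r, hr, hxr⟩ := hx
          have h1 := (hkey r hr).2.2.2.2.1.1 hxr
          obtain ⟨i, hi⟩ := (hkey r hr).1
          exact ⟨h1.1, subtree_mono (hi ▸ List.prefix_append p [i]) h1.2⟩
        · intro q hq hqsub
          by_cases hqp : q = p
          · exfalso
            obtain ⟨i, hi⟩ := (hkey r0 hr0).1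
            refine hq.2.2 i ?_
            rw [← hqp] at hi
            rw [← hi]
            exact (hkey r0 hr0).2.1
          · obtain ⟨w, hw⟩ := hqsub.2
            have hwne : w ≠ [] := by rintro rfl; exact hqp (by simpa using hw.symm)
            obtain ⟨i, w', rfl⟩ : ∃ i w', w = i :: w' := by
              cases w with
              | nil => exact absurd rfl hwne
              | cons i w' => exact ⟨i, w', rfl⟩
            have hpiq : p ++ [i] <+: q := by rw [← hw]; exact ⟨w', by simp⟩
            have hiV : p ++ [i] ∈ V := mem_V_of_prefix hanc hq.1 hpiq
            obtain ⟨r, hr, hr1⟩ := F4 i hiV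
            have hqsubi : q ∈ subtreeOf t r.1 := by rw [hr1]; exact ⟨hqsub.1, hpiq⟩
            obtain ⟨r', hr'mem, hr'sub, hr'q⟩ := (hkey r hr).2.2.2.2.1.2 q hq hqsubi
            refine ⟨r', Set.mem_iUnion₂.mpr ⟨r, hr, hr'mem⟩, ?_, hr'q⟩
            refine subtree_mono ?_ hr'sub
            rw [hr1]
            exact List.prefix_append p [i]
      unfold Spec
      rw [hdp]
      refine ⟨⟨⟨_, hfeasU, htsum.symm⟩, ?_⟩, hfeasU, htsum.symm, rfl⟩
      rintro x ⟨S, hFS, rfl⟩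
      have hSfin := hfeas_fin S hFS
      rw [tsum_fin cost hSfin]
      by_cases hpS : p ∈ S
      · exact le_trans hge (hcostle S hSfin hpS)
      · exact LB S hFS hSfin hpS

theorem spec_all (t : RTree) (V : Set (List ℕ)) (cost xi : List ℕ → ℝ)
    (hVnodes : ∀ p ∈ V, t.valid p)
    (hanc : ∀ (p : List ℕ) (i : ℕ), p ++ [i] ∈ V → p ∈ V)
    (hcost : ∀ p, 0 ≤ cost p) (hxi : ∀ p, xi p = 0) :
    ∀ (s : RTree) (p : List ℕ), t.subAt p = some s → p ∈ V → Spec t V cost xi s p := by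
  have H : ∀ (n : ℕ) (s : RTree), sizeOf s ≤ n → ∀ p, t.subAt p = some s → p ∈ V →
      Spec t V cost xi s p := by
    intro n
    induction n with
    | zero =>
      intro s hs
      cases s with
      | node cs => simp at hs
    | succ n ihn =>
      intro s hs p hsubp hpV
      cases s with
      | node cs =>
        refine spec_node t V cost xi hVnodes hanc hcost hxi cs p ?_ hsubp hpV
        intro c hc q hq hqV
        refine ihn c ?_ q hq hqV
        have h1 := List.sizeOf_lt_of_mem hc
        have h2 : sizeOf (node cs) = 1 + sizeOf cs := by simp
        omega
  intro s p hsubp hpV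
  exact H (sizeOf s) s le_rfl p hsubp hpV

end RTree

open RTree in
/-- Assume `xi a = 0` for every node `a` (zero merge cost `α_merge = 0`, in
which case the objective `Cost_a(S)` reduces to `Σ_{b ∈ S} cost b`).  Then for
every node `a ∈ V`, `sigma(a)` is the minimum of `Σ_{b ∈ S} cost b` over all
sets `S` feasible for `subtree(a)`, and this minimum is attained by the set
`Vstar(a)` computed by the recurrences. -/
theorem streak_dp_optimal
    (t : RTree) (V : Set (List ℕ)) (cost xi : List ℕ → ℝ)
    (hVnodes : ∀ p ∈ V, t.valid p)
    (hanc : ∀ (p : List ℕ) (i : ℕ), p ++ [i] ∈ V → p ∈ V)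
    (hcost : ∀ p, 0 ≤ cost p) (hxi : ∀ p, xi p = 0) :
    ∀ a : List ℕ, t.valid a → a ∈ V →
      IsLeast {x : ℝ | ∃ S : Set (List ℕ), Feasible t V a S ∧
          x = ∑' b : (S : Set (List ℕ)), cost b.1}
        (sigmaAt t V cost xi a) ∧
      Feasible t V a (VstarAt t V cost xi a) ∧
      sigmaAt t V cost xi a = ∑' b : (VstarAt t V cost xi a : Set (List ℕ)), cost b.1 := by
  intro a hval haV
  obtain ⟨s, hs⟩ := Option.isSome_iff_exists.mp hval
  have hspec := spec_all t V cost xi hVnodes hanc hcost hxi s a hs haV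
  have h1 : VstarAt t V cost xi a = (dp V cost xi s a).1 := by
    rw [VstarAt, hs]
  have h2 : sigmaAt t V cost xi a = (dp V cost xi s a).2.1 := by
    rw [sigmaAt, hs]
  rw [h1, h2]
  exact ⟨hspec.1, hspec.2.1, hspec.2.2.1⟩
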